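/- arXiv:1807.08580 — 9 statements merged into one kernel-verified Lean document; each statement's English description precedes it below -/
import Mathlib

section
/- If θ and φ are orthogonal orthomorphisms of a group G (meaning g ↦ θ(g)⁻¹·φ(g) is a bijection), then the Latin squares L_θ and L_φ, with (i,j)-entries gᵢ·θ(gⱼ) and gᵢ·φ(gⱼ) respectively, are orthogonal: the map (i,j) ↦ (gᵢ·θ(gⱼ), gᵢ·φ(gⱼ)) is injective on G × G. -/
/-- An orthomorphism of a group `G`. -/
def IsOrthomorphism {G : Type*} [Group G] (θ : G → G) : Prop :=
  Function.Bijective θ ∧ Function.Bijective (fun g => g⁻¹ * θ g)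

theorem stmt_2 {G : Type*} [Group G] (θ φ : G → G)
    (hθ : IsOrthomorphism θ) (hφ : IsOrthomorphism φ)
    (horth : Function.Bijective (fun g => (θ g)⁻¹ * φ g)) :
    Function.Injective (fun p : G × G => (p.1 * θ p.2, p.1 * φ p.2)) := by
  rintro ⟨a, b⟩ ⟨c, d⟩ h
  simp only [Prod.mk.injEq] at h
  obtain ⟨h1, h2⟩ := h
  have hbd : b = d := by
    apply horth.1
    show (θ b)⁻¹ * φ b = (θ d)⁻¹ * φ d
    calc (θ b)⁻¹ * φ b = (a * θ b)⁻¹ * (a * φ b) := by group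
      _ = (c * θ d)⁻¹ * (c * φ d) := by rw [h1, h2]
      _ = (θ d)⁻¹ * φ d := by group
  subst hbd
  have : a = c := by
    have := mul_right_cancel h1
    exact this
  simp [this]
end

section
/- Let (Gᵢ)_{i∈I} be a family of groups, each with a strong complete mapping φᵢ fixing the identity. Then the componentwise map φ'((gᵢ)ᵢ) = (φᵢ(gᵢ))ᵢ restricts to a strong complete mapping of the direct sum ⊕ᵢ Gᵢ (the subgroup of the product consisting of elements with finite support). -/
/-- A strong complete mapping of a group `G`. -/
def IsStrongCompleteMapping {G : Type*} [Group G] (θ : G → G) : Prop :=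
  Function.Bijective θ ∧ Function.Bijective (fun g => g⁻¹ * θ g) ∧
    Function.Bijective (fun g => g * θ g)

/-- The direct sum of a family of groups: the subgroup of the direct product
consisting of families with all but finitely many coordinates the identity. -/
def directSum {I : Type*} (G : I → Type*) [∀ i, Group (G i)] :
    Subgroup (∀ i, G i) where
  carrier := {f | {i | f i ≠ 1}.Finite}
  one_mem' := by
    simp
  mul_mem' := by
    intro f g hf hg
    refine Set.Finite.subset (hf.union hg) ?_
    intro i hi
    simp only [Set.mem_setOf_eq, Set.mem_union] at *
    by_contra h
    push_neg at h
    exact hi (by simp [Pi.mul_apply, h.1, h.2])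
  inv_mem' := by
    intro f hf
    refine Set.Finite.subset hf ?_
    intro i hi
    simp only [Set.mem_setOf_eq] at *
    exact fun h => hi (by simp [Pi.inv_apply, h])

lemma mem_directSum_of_comp {I : Type*} (G : I → Type*) [∀ i, Group (G i)]
    (σ : ∀ i, G i → G i) (hσ1 : ∀ i, σ i 1 = 1) (f : ∀ i, G i)
    (hf : f ∈ directSum G) : (fun i => σ i (f i)) ∈ directSum G := by
  refine Set.Finite.subset hf ?_
  intro i hi
  simp only [Set.mem_setOf_eq] at *
  exact fun h => hi (by rw [h, hσ1])

/-- The induced map on the direct sum. -/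
def inducedMap {I : Type*} (G : I → Type*) [∀ i, Group (G i)]
    (σ : ∀ i, G i → G i) (hσ1 : ∀ i, σ i 1 = 1) (f : directSum G) : directSum G :=
  ⟨fun i => σ i ((f : ∀ i, G i) i), mem_directSum_of_comp G σ hσ1 _ f.2⟩

lemma inducedMap_bijective {I : Type*} (G : I → Type*) [∀ i, Group (G i)]
    (σ : ∀ i, G i → G i) (hσ : ∀ i, Function.Bijective (σ i)) (hσ1 : ∀ i, σ i 1 = 1) :
    Function.Bijective (inducedMap G σ hσ1) := by
  constructor
  · intro f g h
    ext i
    exact (hσ i).1 (congrFun (congrArg Subtype.val h) i)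
  · intro g
    obtain ⟨f, hf⟩ : ∃ f : ∀ i, G i, ∀ i, σ i (f i) = (g : ∀ i, G i) i := by
      choose f hf using fun i => (hσ i).2 ((g : ∀ i, G i) i)
      exact ⟨f, hf⟩
    have hmem : f ∈ directSum G := by
      refine Set.Finite.subset g.2 ?_
      intro i hi
      simp only [Set.mem_setOf_eq] at *
      intro h
      apply hi
      apply (hσ i).1
      rw [hf, h, hσ1]
    refine ⟨⟨f, hmem⟩, ?_⟩
    ext i
    exact hf i

theorem stmt_4 {I : Type*} (G : I → Type*) [∀ i, Group (G i)]
    (φ : ∀ i, G i → G i) (hφ : ∀ i, IsStrongCompleteMapping (φ i))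
    (hφ1 : ∀ i, φ i 1 = 1) :
    ∃ ψ : directSum G → directSum G,
      (∀ f : directSum G, ∀ i, (ψ f : ∀ i, G i) i = φ i ((f : ∀ i, G i) i)) ∧
        IsStrongCompleteMapping ψ := by
  refine ⟨inducedMap G φ hφ1, fun f i => rfl, ?_, ?_, ?_⟩
  · exact inducedMap_bijective G φ (fun i => (hφ i).1) hφ1
  · have h : (fun f : directSum G => f⁻¹ * inducedMap G φ hφ1 f) =
        inducedMap G (fun i x => x⁻¹ * φ i x) (fun i => by simp [hφ1]) := by
      funext f
      ext i
      rfl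
    rw [h]
    exact inducedMap_bijective G _ (fun i => (hφ i).2.1) _
  · have h : (fun f : directSum G => f * inducedMap G φ hφ1 f) =
        inducedMap G (fun i x => x * φ i x) (fun i => by simp [hφ1]) := by
      funext f
      ext i
      rfl
    rw [h]
    exact inducedMap_bijective G _ (fun i => (hφ i).2.2) _
end

section
/- Let H be a subgroup of an abelian group G (written additively). If H has a strong complete mapping and the quotient G/H has a strong complete mapping, then G has a strong complete mapping. -/
/-- A strong complete mapping of an additively written abelian group `A`. -/
def IsAddSCM {A : Type*} [AddCommGroup A] (θ : A → A) : Prop :=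
  Function.Bijective θ ∧ Function.Bijective (fun a => θ a - a) ∧
    Function.Bijective (fun a => θ a + a)

section aux

variable {G : Type*} [AddCommGroup G] (H : AddSubgroup G)

private lemma fib_mem (g : G) : g - ((g : G ⧸ H)).out ∈ H := by
  rw [← QuotientAddGroup.eq_zero_iff, QuotientAddGroup.mk_sub,
    QuotientAddGroup.out_eq', sub_self]

/-- The `H`-component of `g` with respect to the section `Quotient.out`. -/
private noncomputable def fib (g : G) : H := ⟨g - ((g : G ⧸ H)).out, fib_mem H g⟩

private lemma key (ψ : G ⧸ H → G ⧸ H) (hψ : Function.Bijective ψ) (c : G ⧸ H → G)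
    (hc : ∀ q, (c q : G ⧸ H) = ψ q) (β : H → H) (hβ : Function.Bijective β) :
    Function.Bijective (fun g : G => c (g : G ⧸ H) + (β (fib H g) : G)) := by
  constructor
  · intro g₁ g₂ hg
    dsimp only at hg
    have hq : ψ (g₁ : G ⧸ H) = ψ (g₂ : G ⧸ H) := by
      have := congrArg (QuotientAddGroup.mk (s := H)) hg
      simpa [QuotientAddGroup.mk_add, hc, (QuotientAddGroup.eq_zero_iff _).mpr (β (fib H g₁)).2,
        (QuotientAddGroup.eq_zero_iff _).mpr (β (fib H g₂)).2] using this
    have hq' : (g₁ : G ⧸ H) = (g₂ : G ⧸ H) := hψ.1 hq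
    have hβeq : β (fib H g₁) = β (fib H g₂) := by
      have hc' : c (g₁ : G ⧸ H) = c (g₂ : G ⧸ H) := by rw [hq']
      rw [hc'] at hg
      exact Subtype.ext (add_left_cancel hg)
    have hfib : fib H g₁ = fib H g₂ := hβ.1 hβeq
    have h2 : g₁ - ((g₁ : G ⧸ H)).out = g₂ - ((g₂ : G ⧸ H)).out := congrArg Subtype.val hfib
    rw [hq'] at h2
    exact sub_left_injective h2
  · intro x
    obtain ⟨q, hqx⟩ := hψ.2 (x : G ⧸ H)
    have hmem : x - c q ∈ H := by
      rw [← QuotientAddGroup.eq_zero_iff, QuotientAddGroup.mk_sub, hc, hqx, sub_self]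
    obtain ⟨h, hh⟩ := hβ.2 ⟨x - c q, hmem⟩
    refine ⟨q.out + (h : G), ?_⟩
    have hq' : ((q.out + (h : G) : G) : G ⧸ H) = q := by
      rw [QuotientAddGroup.mk_add, QuotientAddGroup.out_eq',
        (QuotientAddGroup.eq_zero_iff _).mpr h.2, add_zero]
    have hfib : fib H (q.out + (h : G)) = h := by
      apply Subtype.ext
      show q.out + (h : G) - ((((q.out + (h : G)) : G) : G ⧸ H)).out = (h : G)
      rw [hq']
      abel
    dsimp only
    rw [hq', hfib, hh]
    simp

end aux

theorem stmt_6 {G : Type*} [AddCommGroup G] (H : AddSubgroup G)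
    (hH : ∃ θ : H → H, IsAddSCM θ)
    (hQ : ∃ θ : G ⧸ H → G ⧸ H, IsAddSCM θ) :
    ∃ θ : G → G, IsAddSCM θ := by
  obtain ⟨θH, hθH1, hθH2, hθH3⟩ := hH
  obtain ⟨φ, hφ1, hφ2, hφ3⟩ := hQ
  have hfibval : ∀ g : G, (fib H g : G) = g - ((g : G ⧸ H)).out := fun g => rfl
  refine ⟨fun g => (φ (g : G ⧸ H)).out + (θH (fib H g) : G), ?_, ?_, ?_⟩
  · exact key H φ hφ1 (fun q => (φ q).out) (fun q => QuotientAddGroup.out_eq' _) θH hθH1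
  · have h := key H (fun q => φ q - q) hφ2 (fun q => (φ q).out - q.out)
      (by intro q
          rw [QuotientAddGroup.mk_sub, QuotientAddGroup.out_eq', QuotientAddGroup.out_eq'])
      (fun h => θH h - h) hθH2
    convert h using 1
    funext g
    dsimp only
    rw [AddSubgroup.coe_sub, hfibval]
    abel
  · have h := key H (fun q => φ q + q) hφ3 (fun q => (φ q).out + q.out)
      (by intro q
          rw [QuotientAddGroup.mk_add, QuotientAddGroup.out_eq', QuotientAddGroup.out_eq'])
      (fun h => θH h + h) hθH3
    convert h using 1
    funext g
    dsimp only
    rw [AddSubgroup.coe_add, hfibval]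
    abel
end

section
/- Let A be an abelian group (written additively) and θ a strong complete mapping of A. Then the function L : A × A → A defined by L(i,j) = i + θ(j) is a Knut Vic design: for every fixed i the map j ↦ L(i,j) is a bijection, for every fixed j the map i ↦ L(i,j) is a bijection, for every k the map i ↦ L(i, k+i) is a bijection (left diagonals), and for every k the map i ↦ L(i, k−i) is a bijection (right diagonals). -/
theorem stmt_8 {A : Type*} [AddCommGroup A] (θ : A → A) (hθ : IsAddSCM θ) :
    (∀ i : A, Function.Bijective (fun j : A => i + θ j)) ∧
      (∀ j : A, Function.Bijective (fun i : A => i + θ j)) ∧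
      (∀ k : A, Function.Bijective (fun i : A => i + θ (k + i))) ∧
      (∀ k : A, Function.Bijective (fun i : A => i + θ (k - i))) := by
  obtain ⟨hb, hs, ha⟩ := hθ
  refine ⟨fun i => ?_, fun j => ?_, fun k => ?_, fun k => ?_⟩
  · exact (Equiv.addLeft i).bijective.comp hb
  · exact (Equiv.addRight (θ j)).bijective
  · have : (fun i : A => i + θ (k + i)) =
        (fun a : A => (θ a + a) - k) ∘ (fun i : A => k + i) := by
      funext i; simp [Function.comp]; abel
    rw [this]
    exact ((Equiv.subRight k).bijective.comp ha).comp (Equiv.addLeft k).bijective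
  · have : (fun i : A => i + θ (k - i)) =
        (fun a : A => k + (θ a - a)) ∘ (fun i : A => k - i) := by
      funext i; simp [Function.comp]; abel
    rw [this]
    exact ((Equiv.addLeft k).bijective.comp hs).comp (Equiv.subLeft k).bijective
end

section
/- Define a : ℝ → ℝ by a(x) = e^x − 1 for x ≥ 0 and a(x) = −ln(1−x) for x < 0. Then a is a strictly increasing bijection from ℝ to ℝ, and for every d > 0 the map x ↦ a(x+d) − a(x) is a bijection from ℝ to the positive reals (0, ∞). -/
open Real in
/-- The directed S∞-terrace for (ℝ, +): `a x = e^x - 1` for `x ≥ 0` and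
`a x = -ln (1 - x)` for `x < 0`. -/
noncomputable def aFun (x : ℝ) : ℝ := if 0 ≤ x then Real.exp x - 1 else -Real.log (1 - x)

noncomputable def aDeriv (x : ℝ) : ℝ := if 0 ≤ x then Real.exp x else (1 - x)⁻¹

open Real Filter

lemma hasDerivAt_neg_log_one_sub {x : ℝ} (hx : x < 1) :
    HasDerivAt (fun y : ℝ => -Real.log (1 - y)) ((1 - x)⁻¹) x := by
  have h1 : HasDerivAt (fun y : ℝ => 1 - y) (-1) x := by
    simpa using (hasDerivAt_id' x).const_sub (1:ℝ)
  have h2 : HasDerivAt (fun y : ℝ => Real.log (1 - y)) ((-1) / (1 - x)) x :=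
    h1.log (by linarith)
  have := h2.neg
  rw [show (1 - x)⁻¹ = -(-1 / (1 - x)) by ring]
  exact this

lemma hasDerivAt_aFun (x : ℝ) : HasDerivAt aFun (aDeriv x) x := by
  rcases lt_trichotomy x 0 with hx | hx | hx
  · have heq : aFun =ᶠ[nhds x] fun y => -Real.log (1 - y) := by
      filter_upwards [eventually_lt_nhds hx] with y hy
      simp [aFun, not_le.mpr hy]
    have : HasDerivAt (fun y : ℝ => -Real.log (1 - y)) ((1 - x)⁻¹) x :=
      hasDerivAt_neg_log_one_sub (by linarith)
    rw [aDeriv, if_neg (not_le.mpr hx)]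
    exact this.congr_of_eventuallyEq heq
  · subst hx
    have hIci : HasDerivWithinAt aFun 1 (Set.Ici 0) 0 := by
      have h : HasDerivAt (fun y : ℝ => Real.exp y - 1) 1 0 := by
        simpa using (Real.hasDerivAt_exp 0).sub_const (1:ℝ)
      refine h.hasDerivWithinAt.congr (fun y hy => ?_) ?_
      · simp [aFun, Set.mem_Ici.mp hy]
      · simp [aFun]
    have hIic : HasDerivWithinAt aFun 1 (Set.Iic 0) 0 := by
      have h : HasDerivAt (fun y : ℝ => -Real.log (1 - y)) 1 0 := by
        simpa using hasDerivAt_neg_log_one_sub (show (0:ℝ) < 1 by norm_num)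
      refine h.hasDerivWithinAt.congr (fun y hy => ?_) ?_
      · rcases lt_or_eq_of_le (Set.mem_Iic.mp hy) with h' | h'
        · simp [aFun, not_le.mpr h']
        · subst h'; simp [aFun]
      · simp [aFun]
    have := hIic.union hIci
    rw [Set.Iic_union_Ici] at this
    rw [hasDerivWithinAt_univ] at this
    simpa [aDeriv] using this
  · have heq : aFun =ᶠ[nhds x] fun y => Real.exp y - 1 := by
      filter_upwards [eventually_gt_nhds hx] with y hy
      simp [aFun, hy.le]
    have : HasDerivAt (fun y : ℝ => Real.exp y - 1) (Real.exp x) x := by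
      simpa using (Real.hasDerivAt_exp x).sub_const (1:ℝ)
    rw [aDeriv, if_pos hx.le]
    exact this.congr_of_eventuallyEq heq

lemma aDeriv_pos (x : ℝ) : 0 < aDeriv x := by
  unfold aDeriv
  split
  · exact Real.exp_pos x
  · have hx : x < 0 := not_le.mp (by assumption)
    have : (0:ℝ) < 1 - x := by linarith
    positivity

lemma aDeriv_strictMono : StrictMono aDeriv := by
  intro x y hxy
  unfold aDeriv
  rcases le_or_gt 0 x with hx | hx <;> rcases le_or_gt 0 y with hy | hy
  · rw [if_pos hx, if_pos hy]; exact Real.exp_lt_exp.mpr hxy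
  · linarith
  · rw [if_neg (not_le.mpr hx), if_pos hy]
    have h1 : (1 - x)⁻¹ < 1 := by
      rw [inv_lt_one_iff₀]; right; linarith
    calc (1 - x)⁻¹ < 1 := h1
      _ ≤ Real.exp y := by simpa using Real.one_le_exp hy
  · rw [if_neg (not_le.mpr hx), if_neg (not_le.mpr hy)]
    apply inv_strictAnti₀ <;> linarith

lemma aFun_strictMono : StrictMono aFun :=
  strictMono_of_deriv_pos fun x => by
    rw [(hasDerivAt_aFun x).deriv]; exact aDeriv_pos x

lemma aFun_continuous : Continuous aFun :=
  continuous_iff_continuousAt.mpr fun x => (hasDerivAt_aFun x).differentiableAt.continuousAt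

lemma aFun_tendsto_atTop : Tendsto aFun atTop atTop := by
  have heq : aFun =ᶠ[atTop] fun y => Real.exp y - 1 := by
    filter_upwards [eventually_ge_atTop (0:ℝ)] with y hy
    simp [aFun, hy]
  exact Tendsto.congr' heq.symm ((Real.tendsto_exp_atTop).atTop_add tendsto_const_nhds)

lemma aFun_tendsto_atBot : Tendsto aFun atBot atBot := by
  have heq : aFun =ᶠ[atBot] fun y => -Real.log (1 - y) := by
    filter_upwards [eventually_lt_atBot (0:ℝ)] with y hy
    simp [aFun, not_le.mpr hy]
  apply Tendsto.congr' heq.symm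
  have h1 : Tendsto (fun y : ℝ => 1 - y) atBot atTop := by
    apply tendsto_atTop_add_const_left
    exact tendsto_neg_atBot_atTop
  exact tendsto_neg_atTop_atBot.comp (Real.tendsto_log_atTop.comp h1)

lemma aFun_bijective : Function.Bijective aFun :=
  ⟨aFun_strictMono.injective,
   Continuous.surjective aFun_continuous aFun_tendsto_atTop aFun_tendsto_atBot⟩

lemma g_hasDerivAt (d x : ℝ) :
    HasDerivAt (fun x => aFun (x + d) - aFun x) (aDeriv (x + d) - aDeriv x) x := by
  have h1 : HasDerivAt (fun x => aFun (x + d)) (aDeriv (x + d)) x := by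
    have := HasDerivAt.comp x (hasDerivAt_aFun (x + d)) ((hasDerivAt_id x).add_const d)
    simpa [Function.comp_def] using this
  exact h1.sub (hasDerivAt_aFun x)

lemma g_continuous (d : ℝ) : Continuous (fun x => aFun (x + d) - aFun x) :=
  continuous_iff_continuousAt.mpr fun x =>
    (g_hasDerivAt d x).differentiableAt.continuousAt

lemma g_strictMono {d : ℝ} (hd : 0 < d) : StrictMono (fun x => aFun (x + d) - aFun x) :=
  strictMono_of_deriv_pos fun x => by
    rw [(g_hasDerivAt d x).deriv]
    have := aDeriv_strictMono (show x < x + d by linarith)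
    linarith

lemma g_pos {d : ℝ} (hd : 0 < d) (x : ℝ) : 0 < aFun (x + d) - aFun x := by
  have := aFun_strictMono (show x < x + d by linarith); linarith

lemma g_tendsto_atTop {d : ℝ} (hd : 0 < d) :
    Tendsto (fun x => aFun (x + d) - aFun x) atTop atTop := by
  have heq : (fun x => aFun (x + d) - aFun x) =ᶠ[atTop]
      fun x => Real.exp x * (Real.exp d - 1) := by
    filter_upwards [eventually_ge_atTop (0:ℝ)] with x hx
    have h1 : aFun (x + d) = Real.exp (x + d) - 1 := by
      simp [aFun, show (0:ℝ) ≤ x + d by linarith]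
    have h2 : aFun x = Real.exp x - 1 := by simp [aFun, hx]
    rw [h1, h2, Real.exp_add]; ring
  apply Tendsto.congr' heq.symm
  apply Tendsto.atTop_mul_const
  · nlinarith [Real.add_one_le_exp d]
  · exact Real.tendsto_exp_atTop

lemma g_tendsto_zero {d : ℝ} (hd : 0 < d) :
    Tendsto (fun x => aFun (x + d) - aFun x) atBot (nhds 0) := by
  have heq : (fun x => aFun (x + d) - aFun x) =ᶠ[atBot]
      fun x => Real.log (1 + d / (1 - x - d)) := by
    filter_upwards [eventually_lt_atBot (-d)] with x hx
    have hxd : x + d < 0 := by linarith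
    have hx0 : x < 0 := by linarith
    have h1 : aFun (x + d) = -Real.log (1 - (x + d)) := by
      simp [aFun, not_le.mpr hxd]
    have h2 : aFun x = -Real.log (1 - x) := by simp [aFun, not_le.mpr hx0]
    have hden : (0:ℝ) < 1 - x - d := by linarith
    have hnum : (0:ℝ) < 1 - x := by linarith
    have hfrac : 1 + d / (1 - x - d) = (1 - x) / (1 - x - d) := by
      field_simp
      ring
    rw [h1, h2, hfrac, Real.log_div hnum.ne' hden.ne']
    ring_nf
  apply Tendsto.congr' heq.symm
  have h1 : Tendsto (fun x : ℝ => 1 - x - d) atBot atTop := by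
    apply tendsto_atTop_add_const_right
    apply tendsto_atTop_add_const_left
    exact tendsto_neg_atBot_atTop
  have h2 : Tendsto (fun x : ℝ => 1 + d / (1 - x - d)) atBot (nhds 1) := by
    have := Tendsto.div_atTop (tendsto_const_nhds (α := ℝ) (x := d)) h1
    simpa using (tendsto_const_nhds (α := ℝ) (x := (1:ℝ))).add this
  have h3 := ((Real.continuousAt_log one_ne_zero).tendsto.comp h2)
  simpa [Function.comp_def, Real.log_one] using h3

theorem stmt_9 :
    StrictMono aFun ∧ Function.Bijective aFun ∧
      ∀ d : ℝ, 0 < d →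
        Set.BijOn (fun x => aFun (x + d) - aFun x) Set.univ (Set.Ioi (0 : ℝ)) := by
  refine ⟨aFun_strictMono, aFun_bijective, fun d hd => ?_⟩
  refine ⟨fun x _ => Set.mem_Ioi.mpr (g_pos hd x), (g_strictMono hd).injective.injOn, ?_⟩
  intro y hy
  have hy' : (0:ℝ) < y := hy
  obtain ⟨x1, hx1⟩ := ((g_tendsto_zero hd).eventually (eventually_lt_nhds hy')).exists
  obtain ⟨x2, hx2⟩ := ((g_tendsto_atTop hd).eventually_gt_atTop y).exists
  have := intermediate_value_univ x1 x2 (g_continuous d)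
  obtain ⟨x, hx⟩ := this ⟨hx1.le, hx2.le⟩
  exact ⟨x, Set.mem_univ x, hx⟩
end

section
/- Let G be a group, I an index set contained in an ordered field F, and a : I → G a bijection such that for every d ∈ F with d > 0 and I_(d) := {i ∈ I : i + d ∈ I} nonempty, the map a_(d) : I_(d) → G \ {e} given by a_(d)(i) = a(i)⁻¹·a(i+d) is a bijection. Then for each such d and each pair of distinct x, y ∈ G, there exist unique i, j ∈ I with j = i' + d for some i' (i.e., there is a unique pair of positions at horizontal distance d in the Latin square L(a)(i,j) = a(i)⁻¹·a(j)) such that L(a)(i, i') = x and L(a)(i, i'+d) = y; similarly the pair appears exactly once at vertical distance d. That is, L(a) is a Vatican square. -/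
theorem stmt_10 {F : Type*} [Field F] [LinearOrder F] [IsStrictOrderedRing F] {G : Type*} [Group G]
    (I : Set F) (a : F → G)
    (hbij : Set.BijOn a I Set.univ)
    (hterr : ∀ d : F, 0 < d → ({i ∈ I | i + d ∈ I}).Nonempty →
      Set.BijOn (fun i => (a i)⁻¹ * a (i + d)) {i ∈ I | i + d ∈ I} {g : G | g ≠ 1}) :
    ∀ d : F, 0 < d → ({i ∈ I | i + d ∈ I}).Nonempty →
      ∀ x y : G, x ≠ y →
        -- the ordered pair (x, y) appears exactly once at distance d in rows
        (∃! p : F × F, p.1 ∈ I ∧ p.2 ∈ I ∧ p.2 + d ∈ I ∧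
          (a p.1)⁻¹ * a p.2 = x ∧ (a p.1)⁻¹ * a (p.2 + d) = y) ∧
        -- the ordered pair (x, y) appears exactly once at distance d in columns
        (∃! p : F × F, p.1 ∈ I ∧ p.1 + d ∈ I ∧ p.2 ∈ I ∧
          (a p.1)⁻¹ * a p.2 = x ∧ (a (p.1 + d))⁻¹ * a p.2 = y) := by
  intro d hd hne x y hxy
  have hT := hterr d hd hne
  constructor
  · -- rows
    have hz : x⁻¹ * y ∈ {g : G | g ≠ 1} := by
      simp only [Set.mem_setOf_eq]
      exact fun h => hxy (inv_mul_eq_one.mp h)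
    obtain ⟨j, hj, hjv⟩ := hT.surjOn hz
    simp only at hjv
    obtain ⟨i, hi, hiv⟩ := hbij.surjOn (Set.mem_univ (a j * x⁻¹))
    refine ⟨(i, j), ⟨hi, hj.1, hj.2, ?_, ?_⟩, ?_⟩
    · rw [hiv]; group
    · rw [hiv, mul_inv_rev, inv_inv, mul_assoc, hjv]; group
    · rintro ⟨i', j'⟩ ⟨hi', hj'1, hj'2, hx', hy'⟩
      have hj'v : (a j')⁻¹ * a (j' + d) = x⁻¹ * y := by
        rw [← hx', ← hy']; group
      have hjj : j' = j := hT.injOn ⟨hj'1, hj'2⟩ hj (by simpa using hj'v.trans hjv.symm)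
      have : a i' = a j * x⁻¹ := by
        rw [← hjj, ← hx']; group
      have hii : i' = i := hbij.injOn hi' hi (this.trans hiv.symm)
      simp [hii, hjj]
  · -- columns
    have hz : x * y⁻¹ ∈ {g : G | g ≠ 1} := by
      simp only [Set.mem_setOf_eq]
      exact fun h => hxy (mul_inv_eq_one.mp h)
    obtain ⟨i, hi, hiv⟩ := hT.surjOn hz
    simp only at hiv
    have hiv' : (a i)⁻¹ * a (i + d) = x * y⁻¹ := hiv
    obtain ⟨j, hj, hjv⟩ := hbij.surjOn (Set.mem_univ (a i * x))
    refine ⟨(i, j), ⟨hi.1, hi.2, hj, ?_, ?_⟩, ?_⟩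
    · rw [hjv]; group
    · rw [hjv]
      have : a (i + d) = a i * (x * y⁻¹) := by
        rw [← hiv']; group
      rw [this]; group
    · rintro ⟨i', j'⟩ ⟨hi'1, hi'2, hj', hx', hy'⟩
      have hi'v : (a i')⁻¹ * a (i' + d) = x * y⁻¹ := by
        have h1 : a (i' + d) = a j' * y⁻¹ := by
          rw [← hy']; group
        rw [h1, ← hx']; group
      have hii : i' = i := hT.injOn ⟨hi'1, hi'2⟩ hi (hi'v.trans hiv'.symm)
      have : a j' = a i * x := by
        rw [← hii, ← hx']; group
      have hjj : j' = j := hbij.injOn hj' hj (this.trans hjv.symm)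
      simp [hii, hjj]
end

section
/- Every group G of infinite cardinality κ has a set of κ mutually orthogonal orthomorphisms: there is a family (θ_i)_{i∈I} with |I| = κ of bijections θ_i : G → G such that each map g ↦ g⁻¹·θ_i(g) is a bijection and for all i ≠ j the map g ↦ θ_i(g)⁻¹·θ_j(g) is a bijection. -/
open Cardinal Set

namespace Stmt16

variable {G : Type*} [Group G]

/-- Coherence conditions for a partial family of orthomorphisms, recorded as a set of
triples `(i, g, y)` meaning `θ i g = y`. -/
def Good (S : Set (G × G × G)) : Prop :=
  (∀ ⦃i g y y'⦄, (i,g,y) ∈ S → (i,g,y') ∈ S → y = y') ∧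
  (∀ ⦃i g g' y⦄, (i,g,y) ∈ S → (i,g',y) ∈ S → g = g') ∧
  (∀ ⦃i g g' y y'⦄, (i,g,y) ∈ S → (i,g',y') ∈ S → g⁻¹*y = g'⁻¹*y' → g = g') ∧
  (∀ ⦃i j g g' y z y' z'⦄, i ≠ j → (i,g,y) ∈ S → (j,g,z) ∈ S → (i,g',y') ∈ S →
    (j,g',z') ∈ S → y⁻¹*z = y'⁻¹*z' → g = g')

lemma good_empty : Good (∅ : Set (G × G × G)) := by
  refine ⟨?_, ?_, ?_, ?_⟩ <;> intros <;> simp_all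

lemma good_iUnion {ι : Type*} [LinearOrder ι] {A : ι → Set (G × G × G)}
    (hmono : ∀ ⦃a b : ι⦄, a ≤ b → A a ⊆ A b) (h : ∀ o, Good (A o)) :
    Good (⋃ o, A o) := by
  have mem4 : ∀ {x : G × G × G} {o m : ι}, o ≤ m → x ∈ A o → x ∈ A m :=
    fun hom hx => hmono hom hx
  refine ⟨?_, ?_, ?_, ?_⟩
  · intro i g y y' hy hy'
    obtain ⟨o₁, h₁⟩ := mem_iUnion.1 hy
    obtain ⟨o₂, h₂⟩ := mem_iUnion.1 hy'
    exact (h (max o₁ o₂)).1 (mem4 (le_max_left _ _) h₁) (mem4 (le_max_right _ _) h₂)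
  · intro i g g' y hy hy'
    obtain ⟨o₁, h₁⟩ := mem_iUnion.1 hy
    obtain ⟨o₂, h₂⟩ := mem_iUnion.1 hy'
    exact (h (max o₁ o₂)).2.1 (mem4 (le_max_left _ _) h₁) (mem4 (le_max_right _ _) h₂)
  · intro i g g' y y' hy hy' he
    obtain ⟨o₁, h₁⟩ := mem_iUnion.1 hy
    obtain ⟨o₂, h₂⟩ := mem_iUnion.1 hy'
    exact (h (max o₁ o₂)).2.2.1 (mem4 (le_max_left _ _) h₁) (mem4 (le_max_right _ _) h₂) he
  · intro i j g g' y z y' z' hij h1 h2 h3 h4 he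
    obtain ⟨o₁, m₁⟩ := mem_iUnion.1 h1
    obtain ⟨o₂, m₂⟩ := mem_iUnion.1 h2
    obtain ⟨o₃, m₃⟩ := mem_iUnion.1 h3
    obtain ⟨o₄, m₄⟩ := mem_iUnion.1 h4
    refine (h (max (max o₁ o₂) (max o₃ o₄))).2.2.2 hij
      (mem4 ((le_max_left _ _).trans (le_max_left _ _)) m₁)
      (mem4 ((le_max_right _ _).trans (le_max_left _ _)) m₂)
      (mem4 ((le_max_left _ _).trans (le_max_right _ _)) m₃)
      (mem4 ((le_max_right _ _).trans (le_max_right _ _)) m₄) he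

lemma good_insert {S : Set (G × G × G)} (hG : Good S) {i g y : G}
    (h1 : ∀ y', (i, g, y') ∉ S)
    (h2 : ∀ g', (i, g', y) ∉ S)
    (h3 : ∀ g' y', (i, g', y') ∈ S → g'⁻¹ * y' ≠ g⁻¹ * y)
    (h4 : ∀ j z g' y' z', j ≠ i → (j, g, z) ∈ S → (i, g', y') ∈ S → (j, g', z') ∈ S →
      y'⁻¹ * z' ≠ y⁻¹ * z) :
    Good (insert (i, g, y) S) := by
  obtain ⟨hG1, hG2, hG3, hG4⟩ := hG
  have hmem : ∀ {a b c : G}, (a,b,c) ∈ insert (i,g,y) S →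
      (a = i ∧ b = g ∧ c = y) ∨ (a,b,c) ∈ S := by
    intro a b c h
    rcases h with h | h
    · left; simpa [Prod.ext_iff] using h
    · right; exact h
  refine ⟨?_, ?_, ?_, ?_⟩
  · intro a b c c' hc hc'
    rcases hmem hc with ⟨rfl, rfl, rfl⟩ | hs <;> rcases hmem hc' with h' | h'
    · exact h'.2.2.symm
    · exact absurd h' (h1 _)
    · obtain ⟨rfl, rfl, rfl⟩ := h'; exact absurd hs (h1 _)
    · exact hG1 hs h'
  · intro a b b' c hc hc'
    rcases hmem hc with ⟨rfl, rfl, rfl⟩ | hs <;> rcases hmem hc' with h' | h'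
    · exact (h'.2.1).symm
    · exact absurd h' (h2 _)
    · obtain ⟨rfl, rfl, rfl⟩ := h'; exact absurd hs (h2 _)
    · exact hG2 hs h'
  · intro a b b' c c' hc hc' he
    rcases hmem hc with ⟨rfl, rfl, rfl⟩ | hs <;> rcases hmem hc' with h' | h'
    · exact h'.2.1.symm
    · exact absurd he.symm (h3 _ _ h')
    · obtain ⟨rfl, rfl, rfl⟩ := h'; exact absurd he (h3 _ _ hs)
    · exact hG3 hs h' he
  · intro a b g₁ g₂ p q p' q' hab m1 m2 m3 m4 he
    -- new element can be at most one of m1,m2 and at most one of m3,m4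
    rcases hmem m1 with ⟨rfl, rfl, rfl⟩ | m1'
    · -- m1 is the new element : a = i, g₁ = g, p = y
      rcases hmem m2 with ⟨h, _, _⟩ | m2'
      · exact absurd h.symm hab
      rcases hmem m3 with ⟨_, rfl, _⟩ | m3'
      · rfl
      rcases hmem m4 with ⟨h, _, _⟩ | m4'
      · exact absurd h.symm hab
      exact absurd he.symm (h4 b q g₂ p' q' (Ne.symm hab) m2' m3' m4')
    · rcases hmem m2 with ⟨rfl, rfl, rfl⟩ | m2'
      · -- m2 new : b = i, g₁ = g, q = y
        rcases hmem m4 with ⟨_, rfl, _⟩ | m4'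
        · rfl
        rcases hmem m3 with ⟨h, _, _⟩ | m3'
        · exact absurd h hab
        have he' : q⁻¹ * p = q'⁻¹ * p' := by
          have := congrArg (fun x => x⁻¹) he
          simpa [mul_inv_rev] using this
        exact absurd he'.symm (h4 a p g₂ q' p' hab m1' m4' m3')
      · rcases hmem m3 with ⟨rfl, rfl, rfl⟩ | m3'
        · -- m3 new : a = i, g₂ = g, p' = y
          rcases hmem m4 with ⟨h, _, _⟩ | m4'
          · exact absurd h.symm hab
          exact absurd he (h4 b q' g₁ p q (Ne.symm hab) m4' m1' m2')
        · rcases hmem m4 with ⟨rfl, rfl, rfl⟩ | m4'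
          · -- m4 new : b = i, g₂ = g, q' = y
            have he' : q⁻¹ * p = q'⁻¹ * p' := by
              have := congrArg (fun x => x⁻¹) he
              simpa [mul_inv_rev] using this
            exact absurd he' (h4 a p' g₁ q p hab m3' m2' m1')
          · exact hG4 hab m1' m2' m3' m4' he

/-- Requirement type: totality, surjectivity of `θ i`, of `g ↦ g⁻¹ θ i g`, and of
`g ↦ (θ i g)⁻¹ θ j g`. -/
def Req (G : Type*) : Type _ := (G × G) ⊕ (G × G) ⊕ (G × G) ⊕ (G × G × G)

def sat (S : Set (G × G × G)) : Req G → Prop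
  | .inl (i, g) => ∃ y, (i, g, y) ∈ S
  | .inr (.inl (i, y)) => ∃ g, (i, g, y) ∈ S
  | .inr (.inr (.inl (i, v))) => ∃ g y, (i, g, y) ∈ S ∧ g⁻¹ * y = v
  | .inr (.inr (.inr (i, j, w))) =>
      i = j ∨ ∃ g y z, (i, g, y) ∈ S ∧ (j, g, z) ∈ S ∧ y⁻¹ * z = w

lemma sat_mono {S S' : Set (G × G × G)} (h : S ⊆ S') {r : Req G} (hr : sat S r) :
    sat S' r := by
  rcases r with ⟨i, g⟩ | ⟨i, y⟩ | ⟨i, v⟩ | ⟨i, j, w⟩ <;> simp only [sat] at hr ⊢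
  · exact hr.imp fun y hy => h hy
  · exact hr.imp fun g hg => h hg
  · obtain ⟨g, y, hm, hv⟩ := hr; exact ⟨g, y, h hm, hv⟩
  · exact hr.imp_right fun ⟨g, y, z, m1, m2, hw⟩ => ⟨g, y, z, h m1, h m2, hw⟩

section Card

variable [Infinite G]

lemma exists_notMem {A : Set G} (h : #A < #G) : ∃ y, y ∉ A := by
  by_contra hc
  push_neg at hc
  have : A = Set.univ := Set.eq_univ_of_forall hc
  rw [this, Cardinal.mk_univ] at h
  exact lt_irrefl _ h

lemma mk_image_lt {S : Set (G × G × G)} {f : G × G × G → G} (hS : #S < #G) :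
    #(f '' S) < #G :=
  mk_image_le.trans_lt hS

lemma mk_triple_lt {S : Set (G × G × G)} (hS : #S < #G)
    (f : (G × G × G) × (G × G × G) × (G × G × G) → G) :
    #(range fun p : ↥S × ↥S × ↥S => f (p.1.1, p.2.1.1, p.2.2.1)) < #G := by
  refine mk_range_le.trans_lt ?_
  have h₀ : ℵ₀ ≤ #G := aleph0_le_mk G
  have h1 : #(↥S × ↥S) < #G := by
    refine lt_of_le_of_lt ?_ (mul_lt_of_lt h₀ hS hS)
    rw [mk_prod, lift_id]
  refine lt_of_le_of_lt ?_ (mul_lt_of_lt h₀ hS h1)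
  rw [mk_prod, lift_id, lift_id]

/-- The extension lemma: any small coherent partial family can be extended by at most two
triples so as to satisfy a given requirement. -/
lemma extend (S : Set (G × G × G)) (hG : Good S) (hS : #S < #G) (r : Req G) :
    ∃ F : Set (G × G × G), #F ≤ 2 ∧ Good (S ∪ F) ∧ sat (S ∪ F) r := by
  have h2 : (2 : Cardinal) < #G := lt_of_lt_of_le (nat_lt_aleph0 2) (aleph0_le_mk G)
  rcases r with ⟨i, g⟩ | ⟨i, y₀⟩ | ⟨i, v⟩ | ⟨i, j, w⟩
  · -- R1 : g ∈ dom (θ i)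
    by_cases hdone : ∃ y, (i, g, y) ∈ S
    · exact ⟨∅, by simp, by simpa using hG, by simpa [sat] using hdone⟩
    push_neg at hdone
    obtain ⟨y, hy⟩ := exists_notMem (A :=
        ((fun t : G × G × G => t.2.2) '' S) ∪
        ((fun t : G × G × G => g * (t.2.1⁻¹ * t.2.2)) '' S) ∪
        (range fun p : ↥S × ↥S × ↥S =>
          (p.1 : G × G × G).2.2 * ((p.2.1 : G × G × G).2.2⁻¹ * (p.2.2 : G × G × G).2.2)))
      (by
        refine (mk_union_le _ _).trans_lt (add_lt_of_lt (aleph0_le_mk G)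
          ((mk_union_le _ _).trans_lt (add_lt_of_lt (aleph0_le_mk G)
            (mk_image_lt hS) (mk_image_lt hS))) ?_)
        exact mk_triple_lt hS fun p => p.1.2.2 * (p.2.1.2.2⁻¹ * p.2.2.2.2))
    simp only [mem_union, not_or] at hy
    obtain ⟨⟨hyv, hyr⟩, hyt⟩ := hy
    refine ⟨{(i, g, y)}, by simp, ?_, ?_⟩
    · rw [union_singleton]
      refine good_insert hG (fun y' => hdone y') ?_ ?_ ?_
      · intro g' hm
        exact hyv ⟨(i, g', y), hm, rfl⟩
      · intro g' y' hm he
        exact hyr ⟨(i, g', y'), hm, by simp only; rw [he, mul_inv_cancel_left]⟩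
      · intro j z g' y' z' hji hm1 hm2 hm3 he
        refine hyt ⟨⟨⟨_, hm1⟩, ⟨_, hm3⟩, ⟨_, hm2⟩⟩, ?_⟩
        have h' : z'⁻¹ * y' = z⁻¹ * y := by
          have := congrArg (·⁻¹) he
          simpa [mul_inv_rev] using this
        simp only
        rw [h', mul_inv_cancel_left]
    · rw [union_singleton]
      exact ⟨y, mem_insert _ _⟩
  · -- R2 : y₀ ∈ range (θ i)
    by_cases hdone : ∃ g, (i, g, y₀) ∈ S
    · exact ⟨∅, by simp, by simpa using hG, by simpa [sat] using hdone⟩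
    push_neg at hdone
    obtain ⟨g, hg⟩ := exists_notMem (A :=
        ((fun t : G × G × G => t.2.1) '' S) ∪
        ((fun t : G × G × G => y₀ * (t.2.1⁻¹ * t.2.2)⁻¹) '' S))
      ((mk_union_le _ _).trans_lt
        (add_lt_of_lt (aleph0_le_mk G) (mk_image_lt hS) (mk_image_lt hS)))
    simp only [mem_union, not_or] at hg
    obtain ⟨hgd, hgr⟩ := hg
    refine ⟨{(i, g, y₀)}, by simp, ?_, ?_⟩
    · rw [union_singleton]
      refine good_insert hG ?_ (fun g' => hdone g') ?_ ?_
      · intro y' hm; exact hgd ⟨(i, g, y'), hm, rfl⟩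
      · intro g' y' hm he
        refine hgr ⟨(i, g', y'), hm, ?_⟩
        simp only
        rw [he]; group
      · intro j z g' y' z' hji hm1 _ _ _
        exact absurd ⟨(j, g, z), hm1, rfl⟩ hgd
    · rw [union_singleton]
      exact ⟨g, mem_insert _ _⟩
  · -- R3 : v ∈ range (g ↦ g⁻¹ θ i g)
    by_cases hdone : ∃ g y, (i, g, y) ∈ S ∧ g⁻¹ * y = v
    · exact ⟨∅, by simp, by simpa using hG, by simpa [sat] using hdone⟩
    push_neg at hdone
    obtain ⟨g, hg⟩ := exists_notMem (A :=
        ((fun t : G × G × G => t.2.1) '' S) ∪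
        ((fun t : G × G × G => t.2.2 * v⁻¹) '' S))
      ((mk_union_le _ _).trans_lt
        (add_lt_of_lt (aleph0_le_mk G) (mk_image_lt hS) (mk_image_lt hS)))
    simp only [mem_union, not_or] at hg
    obtain ⟨hgd, hgv⟩ := hg
    refine ⟨{(i, g, g * v)}, by simp, ?_, ?_⟩
    · rw [union_singleton]
      refine good_insert hG ?_ ?_ ?_ ?_
      · intro y' hm; exact hgd ⟨(i, g, y'), hm, rfl⟩
      · intro g' hm
        refine hgv ⟨(i, g', g * v), hm, ?_⟩
        simp only
        rw [mul_assoc, mul_inv_cancel, mul_one]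
      · intro g' y' hm he
        rw [inv_mul_cancel_left] at he
        exact hdone g' y' hm he
      · intro j z g' y' z' hji hm1 _ _ _
        exact absurd ⟨(j, g, z), hm1, rfl⟩ hgd
    · rw [union_singleton]
      exact ⟨g, g * v, mem_insert _ _, by rw [inv_mul_cancel_left]⟩
  · -- R4 : w ∈ range (g ↦ (θ i g)⁻¹ θ j g)
    by_cases hij : i = j
    · exact ⟨∅, by simp, by simpa using hG, Or.inl hij⟩
    by_cases hdone : ∃ g y z, (i, g, y) ∈ S ∧ (j, g, z) ∈ S ∧ y⁻¹ * z = w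
    · exact ⟨∅, by simp, by simpa using hG, Or.inr (by simpa using hdone)⟩
    push_neg at hdone
    obtain ⟨g, hg⟩ := exists_notMem (A := (fun t : G × G × G => t.2.1) '' S)
      (mk_image_lt hS)
    obtain ⟨y, hy⟩ := exists_notMem (A :=
        ((fun t : G × G × G => t.2.2) '' S) ∪
        ((fun t : G × G × G => t.2.2 * w⁻¹) '' S) ∪
        ((fun t : G × G × G => g * (t.2.1⁻¹ * t.2.2)) '' S) ∪
        ((fun t : G × G × G => g * (t.2.1⁻¹ * t.2.2) * w⁻¹) '' S))
      (by
        refine (mk_union_le _ _).trans_lt (add_lt_of_lt (aleph0_le_mk G)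
          ((mk_union_le _ _).trans_lt (add_lt_of_lt (aleph0_le_mk G)
            ((mk_union_le _ _).trans_lt (add_lt_of_lt (aleph0_le_mk G)
              (mk_image_lt hS) (mk_image_lt hS))) (mk_image_lt hS)))
          (mk_image_lt hS)))
    simp only [mem_union, not_or] at hy
    obtain ⟨⟨⟨hyv, hyw⟩, hyr⟩, hys⟩ := hy
    have hgd : ∀ a z, (a, g, z) ∉ S := by
      intro a z hm; exact hg ⟨(a, g, z), hm, rfl⟩
    have hGood1 : Good (insert (i, g, y) S) := by
      refine good_insert hG (fun y' => hgd i y') ?_ ?_ ?_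
      · intro g' hm; exact hyv ⟨(i, g', y), hm, rfl⟩
      · intro g' y' hm he
        exact hyr ⟨(i, g', y'), hm, by simp only; rw [he, mul_inv_cancel_left]⟩
      · intro k z g' y' z' _ hm1 _ _ _
        exact absurd hm1 (hgd k z)
    have hGood2 : Good (insert (j, g, y * w) (insert (i, g, y) S)) := by
      refine good_insert hGood1 ?_ ?_ ?_ ?_
      · intro y' hm
        rcases hm with hm | hm
        · obtain ⟨hj, -, -⟩ : j = i ∧ g = g ∧ y' = y := by simpa [Prod.ext_iff] using hm
          exact hij hj.symm
        · exact hgd j y' hm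
      · intro g' hm
        rcases hm with hm | hm
        · obtain ⟨hj, -, -⟩ : j = i ∧ g' = g ∧ y * w = y := by
            simpa [Prod.ext_iff] using hm
          exact hij hj.symm
        · exact hyw ⟨(j, g', y * w), hm, by simp only; rw [mul_inv_cancel_right]⟩
      · intro g' y' hm he
        rcases hm with hm | hm
        · obtain ⟨h1, -, -⟩ : j = i ∧ g' = g ∧ y' = y := by simpa [Prod.ext_iff] using hm
          exact hij h1.symm
        · refine hys ⟨(j, g', y'), hm, ?_⟩
          simp only
          rw [he, mul_inv_cancel_left, mul_inv_cancel_right]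
      · intro k z g' y' z' hkj hmz hm1 hm2 he
        -- (k, g, z) must be the previously inserted (i, g, y)
        rcases hmz with hmz | hmz
        · obtain ⟨hk, -, hz⟩ : k = i ∧ g = g ∧ z = y := by
            simpa [Prod.ext_iff] using hmz
          rcases hm1 with hm1 | hm1
          · obtain ⟨hj, -, -⟩ : j = i ∧ g' = g ∧ y' = y := by
              simpa [Prod.ext_iff] using hm1
            exact hij hj.symm
          rcases hm2 with hm2 | hm2
          · obtain ⟨-, hg2, -⟩ : k = i ∧ g' = g ∧ z' = y := by
              simpa [Prod.ext_iff] using hm2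
            exact hgd j y' (hg2 ▸ hm1)
          · have h3 : (y * w)⁻¹ * y = w⁻¹ := by group
            rw [hz, h3] at he
            have hzy : z'⁻¹ * y' = w := by
              have := congrArg (·⁻¹) he
              simpa [mul_inv_rev] using this
            rw [hk] at hm2
            exact hdone g' z' y' hm2 hm1 hzy
        · exact absurd hmz (hgd k z)
    refine ⟨{(j, g, y * w), (i, g, y)}, ?_, ?_, ?_⟩
    · refine (mk_insert_le).trans ?_
      rw [Cardinal.mk_singleton]
      norm_num
    · have : S ∪ {(j, g, y * w), (i, g, y)} =
          insert (j, g, y * w) (insert (i, g, y) S) := by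
        rw [Set.union_insert, Set.union_singleton]
      rw [this]; exact hGood2
    · have : S ∪ {(j, g, y * w), (i, g, y)} =
          insert (j, g, y * w) (insert (i, g, y) S) := by
        rw [Set.union_insert, Set.union_singleton]
      rw [this]
      exact Or.inr ⟨g, y, y * w, Set.mem_insert_of_mem _ (Set.mem_insert _ _),
        Set.mem_insert _ _, by rw [inv_mul_cancel_left]⟩

end Card

section Main

variable (G) [Infinite G]

lemma mk_req : #(Req G) = #G := by
  have h := aleph0_le_mk G
  have hp : #(G × G) = #G := by
    rw [mk_prod]
    simp only [lift_id]
    exact mul_eq_self h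
  have hp3 : #(G × G × G) = #G := by
    rw [mk_prod]
    simp only [lift_id]
    rw [hp]
    exact mul_eq_self h
  show #((G × G) ⊕ (G × G) ⊕ (G × G) ⊕ (G × G × G)) = #G
  simp only [mk_sum, lift_id, hp, hp3, add_eq_self h]

/-- The index type used for the transfinite recursion. -/
abbrev Idx : Type _ := (#G).ord.ToType

noncomputable def enumReq : Idx G ≃ Req G :=
  Classical.choice (Cardinal.eq.1 (by rw [mk_toType, card_ord, mk_req]))

open Classical in
noncomputable def step (B : Set (G × G × G)) (r : Req G) : Set (G × G × G) :=
  if h : Good B ∧ #B < #G then (extend B h.1 h.2 r).choose else ∅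

noncomputable def FF : Idx G → Set (G × G × G) :=
  fun o => wellFounded_lt.fix
    (fun o IH => step G (⋃ o', ⋃ (h : o' < o), IH o' h) (enumReq G o)) o

/-- Everything added at stages before `o`. -/
noncomputable def acc (o : Idx G) : Set (G × G × G) :=
  ⋃ o', ⋃ (_ : o' < o), FF G o'

lemma FF_eq (o : Idx G) : FF G o = step G (acc G o) (enumReq G o) :=
  wellFounded_lt.fix_eq _ o

lemma FF_card (o : Idx G) : #(FF G o) ≤ 2 := by
  rw [FF_eq]
  unfold step
  split
  · next h => exact (extend _ h.1 h.2 _).choose_spec.1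
  · simp

lemma acc_card (o : Idx G) : #(acc G o) < #G := by
  have : acc G o = ⋃ x : Iio o, FF G x.1 := by
    simp [acc, iUnion_subtype]
  rw [this]
  rcases isEmpty_or_nonempty (Iio o) with he | hne
  · rw [iUnion_of_empty]
    simpa using (aleph0_pos.trans_le (aleph0_le_mk G))
  · refine (mk_iUnion_le _).trans_lt ?_
    have h2 : (2 : Cardinal) < #G := (nat_lt_aleph0 2).trans_le (aleph0_le_mk G)
    refine mul_lt_of_lt (aleph0_le_mk G) (mk_Iio_ord_toType o) ?_
    exact lt_of_le_of_lt (ciSup_le' fun x => FF_card G x.1) h2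

lemma acc_mono {o' o : Idx G} (h : o' < o) : acc G o' ∪ FF G o' ⊆ acc G o := by
  apply union_subset
  · refine iUnion_subset fun x => iUnion_subset fun hx => ?_
    exact subset_iUnion_of_subset x (subset_iUnion_of_subset (hx.trans h) subset_rfl)
  · exact subset_iUnion_of_subset o' (subset_iUnion_of_subset h subset_rfl)

lemma stage_mono : ∀ ⦃o' o : Idx G⦄, o' ≤ o →
    acc G o' ∪ FF G o' ⊆ acc G o ∪ FF G o := by
  intro o' o h
  rcases lt_or_eq_of_le h with h | rfl
  · exact (acc_mono G h).trans subset_union_left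
  · exact subset_rfl

lemma invariant (o : Idx G) :
    Good (acc G o ∪ FF G o) ∧ sat (acc G o ∪ FF G o) (enumReq G o) := by
  induction o using WellFoundedLT.induction with
  | _ o IH =>
    have hacc : Good (acc G o) := by
      have heq : acc G o = ⋃ x : Iio o, (acc G x.1 ∪ FF G x.1) := by
        apply Subset.antisymm
        · refine iUnion_subset fun o' => iUnion_subset fun h => ?_
          exact subset_iUnion_of_subset (⟨o', h⟩ : Iio o)
            (subset_union_right.trans subset_rfl)
        · refine iUnion_subset fun x => ?_
          exact acc_mono G x.2
      rw [heq]
      refine good_iUnion (fun a b hab => ?_) (fun x => (IH x.1 x.2).1)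
      exact stage_mono G hab
    have guard : Good (acc G o) ∧ #(acc G o) < #G := ⟨hacc, acc_card G o⟩
    rw [FF_eq]
    unfold step
    rw [dif_pos guard]
    exact ⟨(extend _ guard.1 guard.2 _).choose_spec.2.1,
      (extend _ guard.1 guard.2 _).choose_spec.2.2⟩

/-- The total family. -/
noncomputable def total : Set (G × G × G) := ⋃ o, (acc G o ∪ FF G o)

lemma good_total : Good (total G) :=
  good_iUnion (fun _ _ hab => stage_mono G hab) (fun o => (invariant G o).1)

lemma sat_total (r : Req G) : sat (total G) r := by
  have h := (invariant G ((enumReq G).symm r)).2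
  rw [Equiv.apply_symm_apply] at h
  exact sat_mono (subset_iUnion (fun o => acc G o ∪ FF G o) ((enumReq G).symm r)) h

end Main

end Stmt16

theorem stmt_16 {G : Type*} [Group G] [Infinite G] :
    ∃ θ : G → G → G,
      (∀ i, Function.Bijective (θ i)) ∧
      (∀ i, Function.Bijective (fun g => g⁻¹ * θ i g)) ∧
      (∀ i j, i ≠ j → Function.Bijective (fun g => (θ i g)⁻¹ * θ j g)) := by
  classical
  obtain ⟨G1, G2, G3, G4⟩ := Stmt16.good_total G
  have hsat := Stmt16.sat_total G
  have htot : ∀ i g, ∃ y, (i, g, y) ∈ Stmt16.total G := fun i g =>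
    hsat (Sum.inl (i, g))
  set A := Stmt16.total G with hA
  refine ⟨fun i g => (htot i g).choose, ?_, ?_, ?_⟩
  · intro i
    constructor
    · intro a b h
      have ha := (htot i a).choose_spec
      have hb := (htot i b).choose_spec
      have h' : (htot i a).choose = (htot i b).choose := h
      rw [h'] at ha
      exact G2 ha hb
    · intro y
      obtain ⟨g, hg⟩ := hsat (Sum.inr (Sum.inl (i, y)))
      exact ⟨g, G1 (htot i g).choose_spec hg⟩
  · intro i
    constructor
    · intro a b h
      exact G3 (htot i a).choose_spec (htot i b).choose_spec h
    · intro v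
      obtain ⟨g, y, hm, hv⟩ := hsat (Sum.inr (Sum.inr (Sum.inl (i, v))))
      refine ⟨g, ?_⟩
      simp only
      rw [G1 (htot i g).choose_spec hm, hv]
  · intro i j hij
    constructor
    · intro a b h
      exact G4 hij (htot i a).choose_spec (htot j a).choose_spec
        (htot i b).choose_spec (htot j b).choose_spec h
    · intro w
      rcases hsat (Sum.inr (Sum.inr (Sum.inr (i, j, w)))) with h | ⟨g, y, z, hy, hz, hw⟩
      · exact absurd h hij
      · refine ⟨g, ?_⟩
        simp only
        rw [G1 (htot i g).choose_spec hy, G1 (htot j g).choose_spec hz, hw]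
end

section
/- Every infinite group G that is squareful (i.e., the set {g² : g ∈ G} has the same cardinality as G) has a strong complete mapping: a bijection θ : G → G such that g ↦ g⁻¹·θ(g) and g ↦ g·θ(g) are both bijections. -/
open Cardinal Set Ordinal

universe u

set_option linter.unusedSectionVars false
set_option linter.unusedTactic false

namespace SCM17


variable {G : Type u} [Group G]

/-- A good set is the graph of a partial strong complete mapping. -/
def Good (P : Set (G × G)) : Prop :=
  ∀ p ∈ P, ∀ q ∈ P,
    (p.1 = q.1 ∨ p.2 = q.2 ∨ p.1⁻¹ * p.2 = q.1⁻¹ * q.2 ∨ p.1 * p.2 = q.1 * q.2) → p = q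

def coordFn (i : Fin 4) (p : G × G) : G :=
  if i = 0 then p.1 else if i = 1 then p.2 else if i = 2 then p.1⁻¹ * p.2 else p.1 * p.2

def Done (t : G × Fin 4) (P : Set (G × G)) : Prop := t.1 ∈ coordFn t.2 '' P

lemma exists_notMem {S : Set G} (h : #S < #G) : ∃ a : G, a ∉ S := by
  by_contra hc
  push_neg at hc
  have h1 : (univ : Set G) ⊆ S := fun a _ => hc a
  have h2 := mk_le_mk_of_subset h1
  rw [mk_univ] at h2
  exact absurd h2 h.not_ge

lemma card_union3 [Infinite G] {A B C : Set G} (hA : #A < #G) (hB : #B < #G) (hC : #C < #G) :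
    #(A ∪ B ∪ C : Set G) < #G := by
  have hℵ : ℵ₀ ≤ #G := aleph0_le_mk G
  refine lt_of_le_of_lt (mk_union_le _ _) (add_lt_of_lt hℵ ?_ hC)
  exact lt_of_le_of_lt (mk_union_le _ _) (add_lt_of_lt hℵ hA hB)

lemma key [Infinite G] (hsq : #(range fun g : G => g ^ 2) = #G)
    {S T : Set G} (hS : #S < #G) (hT : #T < #G) : ∃ a : G, a ∉ T ∧ a ^ 2 ∉ S := by
  set R : Set G := range fun g : G => g ^ 2 with hR
  have hRS : #G ≤ #(R \ S : Set G) := by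
    by_contra h
    rw [not_le] at h
    have h1 : R ⊆ (R \ S) ∪ S := fun x hx => by
      by_cases hxS : x ∈ S
      · exact Or.inr hxS
      · exact Or.inl ⟨hx, hxS⟩
    have h2 := (mk_le_mk_of_subset h1).trans (mk_union_le _ _)
    rw [hsq] at h2
    exact absurd h2 (add_lt_of_lt (aleph0_le_mk G) h hS).not_ge
  set A : Set G := {g | g ^ 2 ∉ S} with hA
  have himg : R \ S ⊆ (fun g : G => g ^ 2) '' A := by
    rintro x ⟨⟨g, rfl⟩, hxS⟩
    exact ⟨g, hxS, rfl⟩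
  have hAc : #G ≤ #A := hRS.trans ((mk_le_mk_of_subset himg).trans mk_image_le)
  by_contra hc
  push_neg at hc
  have hsub : A ⊆ T := fun a ha => by
    by_contra h
    exact ha (hc a h)
  exact absurd (hAc.trans (mk_le_mk_of_subset hsub)) hT.not_ge

lemma good_insert {P : Set (G × G)} (hP : Good P) {p : G × G}
    (h : ∀ q ∈ P, p.1 ≠ q.1 ∧ p.2 ≠ q.2 ∧ p.1⁻¹ * p.2 ≠ q.1⁻¹ * q.2 ∧ p.1 * p.2 ≠ q.1 * q.2) :
    Good (insert p P) := by
  rintro a (rfl | ha) b (rfl | hb) hab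
  · rfl
  · obtain ⟨h1, h2, h3, h4⟩ := h b hb
    rcases hab with h' | h' | h' | h'
    exacts [absurd h' h1, absurd h' h2, absurd h' h3, absurd h' h4]
  · obtain ⟨h1, h2, h3, h4⟩ := h a ha
    rcases hab with h' | h' | h' | h'
    exacts [absurd h'.symm h1, absurd h'.symm h2, absurd h'.symm h3, absurd h'.symm h4]
  · exact hP a ha b hb hab


lemma extend [Infinite G] (hsq : #(range fun g : G => g ^ 2) = #G)
    {P : Set (G × G)} (hG : Good P) (hc : #P < #G) (t : G × Fin 4) :
    ∃ Q : Set (G × G), P ⊆ Q ∧ Good Q ∧ #Q ≤ #P + 1 ∧ Done t Q := by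
  obtain ⟨x, i⟩ := t
  have hdom : #(Prod.fst '' P) < #G := lt_of_le_of_lt mk_image_le hc
  have hran : #(Prod.snd '' P) < #G := lt_of_le_of_lt mk_image_le hc
  have hrd : #((fun p : G × G => p.1⁻¹ * p.2) '' P) < #G := lt_of_le_of_lt mk_image_le hc
  have hrm : #((fun p : G × G => p.1 * p.2) '' P) < #G := lt_of_le_of_lt mk_image_le hc
  fin_cases i
  -- case 0 : x in domain
  · by_cases hx : x ∈ Prod.fst '' P
    · exact ⟨P, subset_rfl, hG, self_le_add_right _ _, hx⟩
    · obtain ⟨y, hy⟩ := exists_notMem (card_union3 hran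
        (lt_of_le_of_lt mk_image_le hrd) (lt_of_le_of_lt mk_image_le hrm)
        (B := (x * ·) '' ((fun p : G × G => p.1⁻¹ * p.2) '' P))
        (C := (x⁻¹ * ·) '' ((fun p : G × G => p.1 * p.2) '' P)))
      simp only [mem_union, not_or] at hy
      obtain ⟨⟨hy1, hy2⟩, hy3⟩ := hy
      refine ⟨insert (x, y) P, subset_insert _ _, good_insert hG ?_, mk_insert_le, ?_⟩
      · intro q hq
        refine ⟨?_, ?_, ?_, ?_⟩
        · intro h'; exact hx ⟨q, hq, h'.symm⟩
        · intro h'; exact hy1 ⟨q, hq, h'.symm⟩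
        · intro h'
          exact hy2 ⟨q.1⁻¹ * q.2, ⟨q, hq, rfl⟩, by rw [← h']; group⟩
        · intro h'
          exact hy3 ⟨q.1 * q.2, ⟨q, hq, rfl⟩, by rw [← h']; group⟩
      · exact ⟨(x, y), mem_insert _ _, by simp [coordFn]⟩
  -- case 1 : x in range
  · by_cases hx : x ∈ Prod.snd '' P
    · exact ⟨P, subset_rfl, hG, self_le_add_right _ _, by simpa [Done, coordFn] using hx⟩
    · obtain ⟨a, ha⟩ := exists_notMem (card_union3 hdom
        (lt_of_le_of_lt mk_image_le hrd) (lt_of_le_of_lt mk_image_le hrm)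
        (B := (fun v => x * v⁻¹) '' ((fun p : G × G => p.1⁻¹ * p.2) '' P))
        (C := (fun w => w * x⁻¹) '' ((fun p : G × G => p.1 * p.2) '' P)))
      simp only [mem_union, not_or] at ha
      obtain ⟨⟨ha1, ha2⟩, ha3⟩ := ha
      refine ⟨insert (a, x) P, subset_insert _ _, good_insert hG ?_, mk_insert_le, ?_⟩
      · intro q hq
        refine ⟨?_, ?_, ?_, ?_⟩
        · intro h'; exact ha1 ⟨q, hq, h'.symm⟩
        · intro h'; exact hx ⟨q, hq, h'.symm⟩
        · intro h'
          refine ha2 ⟨q.1⁻¹ * q.2, ⟨q, hq, rfl⟩, ?_⟩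
          rw [← h']; group
        · intro h'
          refine ha3 ⟨q.1 * q.2, ⟨q, hq, rfl⟩, ?_⟩
          rw [← h']; group
      · exact ⟨(a, x), mem_insert _ _, by simp [coordFn]⟩
  -- case 2 : x in range of g⁻¹θg
  · by_cases hx : x ∈ (fun p : G × G => p.1⁻¹ * p.2) '' P
    · exact ⟨P, subset_rfl, hG, self_le_add_right _ _, by simpa [Done, coordFn] using hx⟩
    · obtain ⟨a, haT, haS⟩ := key hsq
        (S := (fun w => w * x⁻¹) '' ((fun p : G × G => p.1 * p.2) '' P))
        (T := Prod.fst '' P ∪ (fun b => b * x⁻¹) '' (Prod.snd '' P))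
        (lt_of_le_of_lt mk_image_le hrm)
        (lt_of_le_of_lt (mk_union_le _ _)
          (add_lt_of_lt (aleph0_le_mk G) hdom (lt_of_le_of_lt mk_image_le hran)))
      simp only [mem_union, not_or] at haT
      obtain ⟨ha1, ha2⟩ := haT
      refine ⟨insert (a, a * x) P, subset_insert _ _, good_insert hG ?_, mk_insert_le, ?_⟩
      · intro q hq
        refine ⟨?_, ?_, ?_, ?_⟩
        · intro h'; exact ha1 ⟨q, hq, h'.symm⟩
        · intro h'
          refine ha2 ⟨q.2, ⟨q, hq, rfl⟩, ?_⟩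
          rw [← h']; group
        · intro h'
          exact hx ⟨q, hq, show q.1⁻¹ * q.2 = x by rw [← h']; group⟩
        · intro h'
          refine haS ⟨q.1 * q.2, ⟨q, hq, rfl⟩, ?_⟩
          show q.1 * q.2 * x⁻¹ = a ^ 2
          rw [← h', pow_two]; group
      · exact ⟨(a, a * x), mem_insert _ _, by simp [coordFn]⟩
  -- case 3 : x in range of gθg
  · by_cases hx : x ∈ (fun p : G × G => p.1 * p.2) '' P
    · exact ⟨P, subset_rfl, hG, self_le_add_right _ _, by simpa [Done, coordFn] using hx⟩
    · obtain ⟨a, haT, haS⟩ := key hsq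
        (S := (fun v => x * v⁻¹) '' ((fun p : G × G => p.1⁻¹ * p.2) '' P))
        (T := Prod.fst '' P ∪ (fun b => x * b⁻¹) '' (Prod.snd '' P))
        (lt_of_le_of_lt mk_image_le hrd)
        (lt_of_le_of_lt (mk_union_le _ _)
          (add_lt_of_lt (aleph0_le_mk G) hdom (lt_of_le_of_lt mk_image_le hran)))
      simp only [mem_union, not_or] at haT
      obtain ⟨ha1, ha2⟩ := haT
      refine ⟨insert (a, a⁻¹ * x) P, subset_insert _ _, good_insert hG ?_, mk_insert_le, ?_⟩
      · intro q hq
        refine ⟨?_, ?_, ?_, ?_⟩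
        · intro h'; exact ha1 ⟨q, hq, h'.symm⟩
        · intro h'
          refine ha2 ⟨q.2, ⟨q, hq, rfl⟩, ?_⟩
          rw [← h']; group
        · intro h'
          refine haS ⟨q.1⁻¹ * q.2, ⟨q, hq, rfl⟩, ?_⟩
          show x * (q.1⁻¹ * q.2)⁻¹ = a ^ 2
          rw [← h', pow_two]
          group
          exact zpow_two a
        · intro h'
          exact hx ⟨q, hq, show q.1 * q.2 = x by rw [← h']; group⟩
      · exact ⟨(a, a⁻¹ * x), mem_insert _ _, by simp [coordFn]⟩

open scoped Classical


variable [Infinite G]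

noncomputable def step (hsq : #(range fun g : G => g ^ 2) = #G) (t : G × Fin 4)
    (P : Set (G × G)) : Set (G × G) :=
  if h : Good P ∧ #P < #G then (extend hsq h.1 h.2 t).choose else P

lemma subset_step (hsq : #(range fun g : G => g ^ 2) = #G) (t : G × Fin 4) (P : Set (G × G)) :
    P ⊆ step hsq t P := by
  unfold step
  split
  next h => exact (extend hsq h.1 h.2 t).choose_spec.1
  next => exact subset_rfl

lemma good_step (hsq : #(range fun g : G => g ^ 2) = #G) (t : G × Fin 4) {P : Set (G × G)}
    (h : Good P) : Good (step hsq t P) := by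
  unfold step
  split
  next h' => exact (extend hsq h'.1 h'.2 t).choose_spec.2.1
  next => exact h

lemma card_step (hsq : #(range fun g : G => g ^ 2) = #G) (t : G × Fin 4) (P : Set (G × G)) :
    #(step hsq t P) ≤ #P + 1 := by
  unfold step
  split
  next h => exact (extend hsq h.1 h.2 t).choose_spec.2.2.1
  next => exact self_le_add_right _ _

lemma done_step (hsq : #(range fun g : G => g ^ 2) = #G) (t : G × Fin 4) {P : Set (G × G)}
    (h1 : Good P) (h2 : #P < #G) : Done t (step hsq t P) := by
  unfold step
  rw [dif_pos ⟨h1, h2⟩]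
  exact (extend hsq h1 h2 t).choose_spec.2.2.2

noncomputable def seq (hsq : #(range fun g : G => g ^ 2) = #G) (τ : Ordinal.{u} → G × Fin 4) :
    Ordinal.{u} → Set (G × G) :=
  lt_wf.fix fun o ih => step hsq (τ o) (⋃ o' : Iio o, ih o'.1 o'.2)

noncomputable def pre (hsq : #(range fun g : G => g ^ 2) = #G) (τ : Ordinal.{u} → G × Fin 4)
    (o : Ordinal.{u}) : Set (G × G) :=
  ⋃ o' : Iio o, seq hsq τ o'.1

lemma seq_def (hsq : #(range fun g : G => g ^ 2) = #G) (τ : Ordinal.{u} → G × Fin 4)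
    (o : Ordinal.{u}) : seq hsq τ o = step hsq (τ o) (pre hsq τ o) := by
  rw [seq, WellFounded.fix_eq]
  rfl

variable {hsq : #(range fun g : G => g ^ 2) = #G} {τ : Ordinal.{u} → G × Fin 4}

lemma seq_mono {o₁ o₂ : Ordinal.{u}} (h : o₁ ≤ o₂) : seq hsq τ o₁ ⊆ seq hsq τ o₂ := by
  rcases lt_or_eq_of_le h with h | rfl
  · calc seq hsq τ o₁ ⊆ pre hsq τ o₂ := subset_iUnion (fun o' : Iio o₂ => seq hsq τ o'.1) ⟨o₁, h⟩
    _ ⊆ seq hsq τ o₂ := by rw [seq_def]; exact subset_step hsq _ _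
  · exact subset_rfl

lemma seq_subset_pre {o₁ o₂ : Ordinal.{u}} (h : o₁ < o₂) : seq hsq τ o₁ ⊆ pre hsq τ o₂ :=
  subset_iUnion (fun o' : Iio o₂ => seq hsq τ o'.1) ⟨o₁, h⟩

lemma good_pre {o : Ordinal.{u}} (ih : ∀ o' < o, Good (seq hsq τ o')) : Good (pre hsq τ o) := by
  intro p hp q hq hpq
  rw [pre, mem_iUnion] at hp hq
  obtain ⟨⟨o₁, h₁⟩, hp⟩ := hp
  obtain ⟨⟨o₂, h₂⟩, hq⟩ := hq
  rcases le_total o₁ o₂ with h | h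
  · exact ih o₂ h₂ p (seq_mono h hp) q hq hpq
  · exact ih o₁ h₁ p hp q (seq_mono h hq) hpq

lemma good_seq (o : Ordinal.{u}) : Good (seq hsq τ o) := by
  induction o using Ordinal.induction with
  | _ o ih =>
    rw [seq_def]
    exact good_step hsq _ (good_pre ih)

lemma card_pre_le (o : Ordinal.{u}) : #(pre hsq τ o) ≤ o.card := by
  induction o using Ordinal.induction with
  | _ o ih =>
    have hseq : ∀ o' < o, #(seq hsq τ o') ≤ o.card := by
      intro o' h
      have h1 : #(seq hsq τ o') ≤ #(pre hsq τ o') + 1 := by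
        rw [seq_def]
        exact (card_step hsq _ _)
      have h2 : #(pre hsq τ o') + 1 ≤ o'.card + 1 := add_le_add_left (ih o' h) 1
      have h3 : o'.card + 1 = (Order.succ o').card := (Ordinal.card_succ o').symm
      have h4 : (Order.succ o').card ≤ o.card := Ordinal.card_le_card (Order.succ_le_of_lt h)
      exact h1.trans (h2.trans (h3 ▸ h4))
    rcases Ordinal.zero_or_succ_or_isSuccLimit o with rfl | ⟨s, rfl⟩ | hlim
    · have : pre hsq τ 0 = ∅ := by
        rw [pre]
        apply iUnion_eq_empty.mpr
        rintro ⟨o', h'⟩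
        exact absurd h' (not_lt_of_ge (zero_le (a := o')))
      simp [this]
    · have h1 : pre hsq τ (Order.succ s) ⊆ seq hsq τ s := by
        rintro p hp
        rw [pre, mem_iUnion] at hp
        obtain ⟨⟨o', h'⟩, hp⟩ := hp
        exact seq_mono (Order.lt_succ_iff.mp h') hp
      calc #(pre hsq τ (Order.succ s)) ≤ #(seq hsq τ s) := mk_le_mk_of_subset h1
        _ ≤ (Order.succ s).card := by
            rw [Ordinal.card_succ]
            have := hseq s (Order.lt_succ s)
            rw [Ordinal.card_succ] at this
            exact this
    · haveI : Nonempty o.ToType := Ordinal.toType_nonempty_iff_ne_zero.mpr hlim.pos.ne'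
      have hre : pre hsq τ o = ⋃ i : o.ToType, seq hsq τ ((ToType.mk (o := o)).symm i).1 := by
        apply subset_antisymm
        · rintro p hp
          rw [pre, mem_iUnion] at hp
          obtain ⟨o', hp⟩ := hp
          rw [mem_iUnion]
          exact ⟨ToType.mk (o := o) o', by rwa [OrderIso.symm_apply_apply]⟩
        · rintro p hp
          rw [mem_iUnion] at hp
          obtain ⟨i, hp⟩ := hp
          exact mem_iUnion.mpr ⟨(ToType.mk (o := o)).symm i, hp⟩
      have hcard : ℵ₀ ≤ o.card := by
        have := Ordinal.card_le_card (Ordinal.omega0_le_of_isSuccLimit hlim)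
        rwa [Ordinal.card_omega0] at this
      calc #(pre hsq τ o) ≤ #o.ToType * ⨆ i : o.ToType, #(seq hsq τ ((ToType.mk (o := o)).symm i).1) := by
            rw [hre]; exact mk_iUnion_le _
        _ ≤ o.card * o.card := by
            refine mul_le_mul' (le_of_eq (Cardinal.mk_toType o)) (ciSup_le' fun i => ?_)
            exact hseq _ ((ToType.mk (o := o)).symm i).2
        _ = o.card := mul_eq_self hcard

theorem main {G : Type u} [Group G] [Infinite G]
    (hsq : Cardinal.mk (Set.range fun g : G => g ^ 2) = Cardinal.mk G) :
    ∃ θ : G → G, Function.Bijective θ ∧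
      Function.Bijective (fun g => g⁻¹ * θ g) ∧
      Function.Bijective (fun g => g * θ g) := by
  classical
  have hℵ : ℵ₀ ≤ #G := aleph0_le_mk G
  -- an enumeration of all tasks
  have hcard4 : #((#G).ord.ToType) = #(G × Fin 4) := by
    rw [mk_ord_toType, mk_prod, mk_fin, Cardinal.lift_uzero, Cardinal.lift_natCast]
    rw [Cardinal.mul_eq_left hℵ (((nat_lt_aleph0 4).le).trans hℵ) (by norm_num)]
  obtain ⟨e⟩ : Nonempty ((#G).ord.ToType ≃ (G × Fin 4)) := Cardinal.eq.mp hcard4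
  have h0 : (0 : Ordinal) < (#G).ord := by
    rw [Cardinal.lt_ord, Ordinal.card_zero]
    exact (mk_ne_zero G).bot_lt
  set τ : Ordinal → G × Fin 4 := fun o =>
    if h : o < (#G).ord then e (ToType.mk ⟨o, h⟩) else e (ToType.mk ⟨0, h0⟩) with hτdef
  have hτ : ∀ t : G × Fin 4, ∃ o < (#G).ord, τ o = t := by
    intro t
    refine ⟨((ToType.mk (o := (#G).ord)).symm (e.symm t)).1,
      ((ToType.mk (o := (#G).ord)).symm (e.symm t)).2, ?_⟩
    rw [hτdef]
    simp only [((ToType.mk (o := (#G).ord)).symm (e.symm t)).2, dif_pos, Subtype.coe_eta,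
      OrderIso.apply_symm_apply, Equiv.apply_symm_apply]
    rw [dif_pos (show _ < (#G).ord from ((ToType.mk (o := (#G).ord)).symm (e.symm t)).2)]
    simp only [Subtype.coe_eta, OrderIso.apply_symm_apply, Equiv.apply_symm_apply]
  set P : Set (G × G) := pre hsq τ ((#G).ord) with hP
  have hPgood : Good P := good_pre fun o' _ => good_seq o'
  have hdone : ∀ t : G × Fin 4, ∃ p ∈ P, coordFn t.2 p = t.1 := by
    intro t
    obtain ⟨o, ho, hot⟩ := hτ t
    have h1 : Good (pre hsq τ o) := good_pre fun o' _ => good_seq o'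
    have h2 : #(pre hsq τ o) < #G := lt_of_le_of_lt (card_pre_le o) (Cardinal.lt_ord.mp ho)
    have h3 : Done t (seq hsq τ o) := by
      rw [seq_def, ← hot]
      exact done_step hsq (τ o) h1 h2
    obtain ⟨p, hp, hpt⟩ := h3
    exact ⟨p, seq_subset_pre ho hp, hpt⟩
  -- extract the mapping
  have hdom : ∀ x : G, ∃ y : G, (x, y) ∈ P := by
    intro x
    obtain ⟨p, hp, hpt⟩ := hdone (x, 0)
    simp only [coordFn] at hpt
    norm_num at hpt
    exact ⟨p.2, by rw [← hpt]; exact hp⟩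
  choose θ hθ using hdom
  have func : ∀ (a b b' : G), (a, b) ∈ P → (a, b') ∈ P → b = b' := by
    intro a b b' h1 h2
    have := hPgood _ h1 _ h2 (Or.inl rfl)
    exact congrArg Prod.snd this
  refine ⟨θ, ⟨?_, ?_⟩, ⟨?_, ?_⟩, ⟨?_, ?_⟩⟩
  · intro x x' h
    have := hPgood _ (hθ x) _ (hθ x') (Or.inr (Or.inl h))
    exact congrArg Prod.fst this
  · intro y
    obtain ⟨p, hp, hpt⟩ := hdone (y, 1)
    simp only [coordFn] at hpt
    norm_num at hpt
    refine ⟨p.1, ?_⟩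
    rw [func p.1 (θ p.1) p.2 (hθ p.1) hp]
    exact hpt
  · intro x x' h
    simp only at h
    have := hPgood _ (hθ x) _ (hθ x') (Or.inr (Or.inr (Or.inl h)))
    exact congrArg Prod.fst this
  · intro v
    obtain ⟨p, hp, hpt⟩ := hdone (v, 2)
    simp only [coordFn] at hpt
    norm_num at hpt
    refine ⟨p.1, ?_⟩
    simp only
    rw [func p.1 (θ p.1) p.2 (hθ p.1) hp]
    exact hpt
  · intro x x' h
    simp only at h
    have := hPgood _ (hθ x) _ (hθ x') (Or.inr (Or.inr (Or.inr h)))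
    exact congrArg Prod.fst this
  · intro v
    obtain ⟨p, hp, hpt⟩ := hdone (v, 3)
    simp only [coordFn] at hpt
    norm_num at hpt
    refine ⟨p.1, ?_⟩
    simp only
    rw [func p.1 (θ p.1) p.2 (hθ p.1) hp]
    exact hpt

end SCM17

theorem stmt_17 {G : Type*} [Group G] [Infinite G]
    (hsq : Cardinal.mk (Set.range fun g : G => g ^ 2) = Cardinal.mk G) :
    ∃ θ : G → G, Function.Bijective θ ∧
      Function.Bijective (fun g => g⁻¹ * θ g) ∧
      Function.Bijective (fun g => g * θ g) := by
  exact SCM17.main hsq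
end

section
/- For every infinite cardinal κ there exists a Knut Vic design of order κ: an abelian group A of cardinality κ and a function L : A × A → A such that every row, every column, every left diagonal i ↦ L(i, k+i), and every right diagonal i ↦ L(i, k−i) is a bijection A → A. -/
universe u

/-- A Knut Vic design on an abelian group `A`: every row, column, left diagonal and
right diagonal of `L` is a bijection. -/
def IsKnutVic {A : Type*} [AddCommGroup A] (L : A → A → A) : Prop :=
  (∀ i, Function.Bijective (fun j => L i j)) ∧
  (∀ j, Function.Bijective (fun i => L i j)) ∧
  (∀ k, Function.Bijective (fun i => L i (k + i))) ∧
  (∀ k, Function.Bijective (fun i => L i (k - i)))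

lemma affine_bij {M : Type*} [AddCommGroup M] [Module (ZMod 5) M]
    (c : ZMod 5) (hc : c ≠ 0) (b : M) :
    Function.Bijective (fun x : M => c • x + b) := by
  haveI : Fact (Nat.Prime 5) := ⟨by norm_num⟩
  have hu := MulAction.bijective (β := M) (Units.mk0 c hc)
  have he : (fun x : M => c • x + b) = (fun x => x + b) ∘ (fun x => Units.mk0 c hc • x) := by
    funext x; simp [Units.smul_def]
  rw [he]
  exact (Equiv.addRight b).bijective.comp hu

theorem stmt_18 (κ : Cardinal.{u}) (hκ : Cardinal.aleph0 ≤ κ) :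
    ∃ (A : Type u) (inst : AddCommGroup A) (L : A → A → A),
      Cardinal.mk A = κ ∧ @IsKnutVic A inst L := by
  obtain ⟨ι, rfl⟩ : ∃ ι : Type u, Cardinal.mk ι = κ := ⟨κ.out, Cardinal.mk_out κ⟩
  haveI : Nontrivial (ZMod 5) := ⟨0, 1, by decide⟩
  haveI : Infinite ι := Cardinal.infinite_iff.2 hκ
  refine ⟨ι →₀ ZMod 5, inferInstance, fun i j => i + (2 : ZMod 5) • j, ?_, ?_, ?_, ?_, ?_⟩
  · rw [Cardinal.mk_finsupp_lift_of_infinite, Cardinal.lift_id', max_eq_left]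
    exact (Cardinal.lift_le_aleph0.2 (Cardinal.mk_le_aleph0)).trans hκ
  · intro i
    have : (fun j : ι →₀ ZMod 5 => i + (2:ZMod 5) • j)
        = fun j => (2:ZMod 5) • j + i := by funext j; abel
    rw [this]; exact affine_bij 2 (by decide) i
  · intro j
    have : (fun i : ι →₀ ZMod 5 => i + (2:ZMod 5) • j)
        = fun i => (1:ZMod 5) • i + (2:ZMod 5) • j := by funext i; rw [one_smul]
    rw [this]; exact affine_bij 1 (by decide) _
  · intro k
    have : (fun i : ι →₀ ZMod 5 => i + (2:ZMod 5) • (k + i))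
        = fun i => (3:ZMod 5) • i + (2:ZMod 5) • k := by
      funext i
      rw [show (3:ZMod 5) = 1 + 2 by decide, add_smul, one_smul, smul_add]
      abel
    rw [show (fun i : ι →₀ ZMod 5 => i + (2:ZMod 5) • (k + i))
        = fun i => (3:ZMod 5) • i + (2:ZMod 5) • k from this]
    exact affine_bij 3 (by decide) _
  · intro k
    have : (fun i : ι →₀ ZMod 5 => i + (2:ZMod 5) • (k - i))
        = fun i => (-1:ZMod 5) • i + (2:ZMod 5) • k := by
      funext i
      rw [neg_smul, one_smul, smul_sub, show (2:ZMod 5) • i = i + i by rw [two_smul]]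
      abel
    rw [show (fun i : ι →₀ ZMod 5 => i + (2:ZMod 5) • (k - i))
        = fun i => (-1:ZMod 5) • i + (2:ZMod 5) • k from this]
    exact affine_bij (-1) (by decide) _
end
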